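/- Let C be a symmetric monoidal category. With Type given its cartesian (symmetric) monoidal structure and Fam(C) the fiberwise symmetric monoidal structure, the functor p : Type ⥤ Fam(C) is strong symmetric monoidal (the structure map p PUnit ≅ (PUnit, fun _ => 𝟙_C) is the identity-index isomorphism, and p X ⊗ p Y ≅ p (X × Y) is given by the identity on index types and the left unitor λ_𝟙 : 𝟙_C ⊗ 𝟙_C ≅ 𝟙_C on fibers), and the adjunction p ⊣ ♭ is a monoidal adjunction; hence (Fam(C), p ⊣ ♭) is a linear-non-linear model in the sense of Benton. -/

import Mathlib

open CategoryTheory CategoryTheory.Limits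

universe w v u

/-- The category `Fam(C)` of families of objects of `C`: an object is a pair
`(X, A)` of a (index) type `X` and a family `A : X → C` of objects of `C`. -/
structure Fam (C : Type u) [CategoryTheory.Category.{v} C] : Type (max (w + 1) u) where
  /-- the index type -/
  idx : Type w
  /-- the family of fibers -/
  fib : idx → C

namespace Fam

variable {C : Type u} [CategoryTheory.Category.{v} C]

/-- A morphism `(X, A) ⟶ (Y, B)` in `Fam(C)` is a pair of a function
`f₀ : X → Y` together with morphisms `f x : A x ⟶ B (f₀ x)` of `C`. -/
instance : CategoryTheory.Category.{max w v} (Fam.{w} C) where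
  Hom A B := Σ f₀ : A.idx → B.idx, ∀ x, A.fib x ⟶ B.fib (f₀ x)
  id A := ⟨fun x => x, fun x => 𝟙 (A.fib x)⟩
  comp f g := ⟨fun x => g.1 (f.1 x), fun x => f.2 x ≫ g.2 (f.1 x)⟩
  id_comp f := congrArg (Sigma.mk f.1) (funext fun x => CategoryTheory.Category.id_comp (f.2 x))
  comp_id f := congrArg (Sigma.mk f.1) (funext fun x => CategoryTheory.Category.comp_id (f.2 x))
  assoc _ _ _ := congrArg (Sigma.mk _) (funext fun _ => CategoryTheory.Category.assoc _ _ _)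

end Fam

namespace Fam

open MonoidalCategory

variable {C : Type u} [Category.{v} C] [MonoidalCategory C]

/-- The fiberwise tensor product on `Fam(C)`:
`(X, A) ⊗ (Y, B) := (X × Y, fun (x, y) => A x ⊗ B y)`. -/
def tensorObj' (A B : Fam.{w} C) : Fam.{w} C :=
  ⟨A.idx × B.idx, fun p => A.fib p.1 ⊗ B.fib p.2⟩

/-- The fiberwise tensor product of morphisms of `Fam(C)`. -/
def tensorHom' {A A' B B' : Fam.{w} C} (f : A ⟶ A') (g : B ⟶ B') :
    tensorObj' A B ⟶ tensorObj' A' B' :=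
  ⟨fun p => (f.1 p.1, g.1 p.2), fun p => f.2 p.1 ⊗ₘ g.2 p.2⟩

/-- The tensor unit of `Fam(C)`: `(PUnit, fun _ => 𝟙_C)`. -/
def unitObj : Fam.{w} C := ⟨PUnit, fun _ => 𝟙_ C⟩

/-- The associator of `Fam(C)`: the evident bijection of product types on
indices, and the associator of `C` on fibers. -/
def assocHom (A B D : Fam.{w} C) :
    tensorObj' (tensorObj' A B) D ⟶ tensorObj' A (tensorObj' B D) :=
  ⟨fun p => (p.1.1, (p.1.2, p.2)), fun _ => (α_ _ _ _).hom⟩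

/-- The left unitor of `Fam(C)`: the evident bijection on indices, and the
left unitor of `C` on fibers. -/
def leftUnitorHom (A : Fam.{w} C) : tensorObj' unitObj A ⟶ A :=
  ⟨fun p => p.2, fun _ => (λ_ _).hom⟩

/-- The right unitor of `Fam(C)`: the evident bijection on indices, and the
right unitor of `C` on fibers. -/
def rightUnitorHom (A : Fam.{w} C) : tensorObj' A unitObj ⟶ A :=
  ⟨fun p => p.1, fun _ => (ρ_ _).hom⟩

/-- The braiding of `Fam(C)`: the swap bijection of product types on indices,
and the braiding of `C` on fibers. -/
def braidHom [SymmetricCategory C] (A B : Fam.{w} C) :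
    tensorObj' A B ⟶ tensorObj' B A :=
  ⟨fun p => (p.2, p.1), fun _ => (β_ _ _).hom⟩

end Fam

namespace Fam

open MonoidalCategory

variable (C : Type u) [Category.{v} C] [MonoidalCategory C]

/-- The functor `p : Type ⥤ Fam(C)` sending `X` to the constantly-unit family
`(X, fun _ => 𝟙_ C)`. -/
def p : Type v ⥤ Fam.{v} C where
  obj X := ⟨X, fun _ => 𝟙_ C⟩
  map f := ⟨f, fun _ => 𝟙 (𝟙_ C)⟩
  map_id _ := rfl
  map_comp _ _ := congrArg (Sigma.mk _) (funext fun _ => (Category.id_comp _).symm)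

/-- The functor `♭ : Fam(C) ⥤ Type` sending `(Y, B)` to `Σ y : Y, (𝟙_C ⟶ B y)`. -/
def flat : Fam.{v} C ⥤ Type v where
  obj A := Σ x : A.idx, (𝟙_ C ⟶ A.fib x)
  map f := TypeCat.ofHom fun s => ⟨f.1 s.1, s.2 ≫ f.2 s.1⟩
  map_id _ := congrArg TypeCat.ofHom
    (funext fun s => congrArg (Sigma.mk s.1) (Category.comp_id s.2))
  map_comp _ _ := congrArg TypeCat.ofHom
    (funext fun _ => congrArg (Sigma.mk _) (Category.assoc _ _ _).symm)

/-- The unit structure map of the strong monoidal functor `p`: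
the identity-index isomorphism `(PUnit, fun _ => 𝟙_C) ⟶ p PUnit`. -/
def pEpsHom : (unitObj : Fam.{v} C) ⟶ (p C).obj (𝟙_ (Type v)) :=
  ⟨fun _ => PUnit.unit, fun _ => 𝟙 (𝟙_ C)⟩

/-- The tensor structure map of the strong monoidal functor `p`:
`p X ⊗ p Y ⟶ p (X × Y)`, given by the identity on index types and the
left unitor `λ_ : 𝟙_C ⊗ 𝟙_C ≅ 𝟙_C` on fibers. -/
def pMuHom (X Y : Type v) :
    tensorObj' ((p C).obj X) ((p C).obj Y) ⟶ (p C).obj (X ⊗ Y) :=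
  ⟨fun q => (q.1, q.2), fun _ => (λ_ (𝟙_ C)).hom⟩

end Fam

namespace Fam

open MonoidalCategory

section CAux

variable {C : Type u} [Category.{v} C] [MonoidalCategory C]

theorem aux_lu {X Y : C} (f : X ⟶ Y) :
    (𝟙 (𝟙_ C) ⊗ₘ f) ≫ (λ_ Y).hom = (λ_ X).hom ≫ f := by simp

theorem aux_ru {X Y : C} (f : X ⟶ Y) :
    (f ⊗ₘ 𝟙 (𝟙_ C)) ≫ (ρ_ Y).hom = (ρ_ X).hom ≫ f := by simp

theorem aux_pent (W X Y Z : C) :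
    ((α_ W X Y).hom ⊗ₘ 𝟙 Z) ≫ ((α_ W (X ⊗ Y) Z).hom ≫ (𝟙 W ⊗ₘ (α_ X Y Z).hom)) =
      (α_ (W ⊗ X) Y Z).hom ≫ (α_ W X (Y ⊗ Z)).hom := by
  simpa using MonoidalCategory.pentagon W X Y Z

theorem aux_tri (X Y : C) :
    (α_ X (𝟙_ C) Y).hom ≫ (𝟙 X ⊗ₘ (λ_ Y).hom) = (ρ_ X).hom ⊗ₘ 𝟙 Y := by
  simpa using MonoidalCategory.triangle X Y

theorem aux_eps_nat :
    (𝟙 (𝟙_ C) ⊗ₘ 𝟙 (𝟙_ C)) ≫ (λ_ (𝟙_ C)).hom = (λ_ (𝟙_ C)).hom ≫ 𝟙 (𝟙_ C) := by simp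

theorem aux_assoc :
    ((λ_ (𝟙_ C)).hom ⊗ₘ 𝟙 (𝟙_ C)) ≫ ((λ_ (𝟙_ C)).hom ≫ 𝟙 (𝟙_ C)) =
      (α_ (𝟙_ C) (𝟙_ C) (𝟙_ C)).hom ≫ ((𝟙 (𝟙_ C) ⊗ₘ (λ_ (𝟙_ C)).hom) ≫ (λ_ (𝟙_ C)).hom) := by
  rw [Category.comp_id, tensorHom_id, id_tensorHom, ← Category.assoc,
    MonoidalCategory.triangle, MonoidalCategory.unitors_equal]

theorem aux_lun :
    (λ_ (𝟙_ C)).hom = (𝟙 (𝟙_ C) ⊗ₘ 𝟙 (𝟙_ C)) ≫ ((λ_ (𝟙_ C)).hom ≫ 𝟙 (𝟙_ C)) := by simp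

theorem aux_run :
    (ρ_ (𝟙_ C)).hom = (𝟙 (𝟙_ C) ⊗ₘ 𝟙 (𝟙_ C)) ≫ ((λ_ (𝟙_ C)).hom ≫ 𝟙 (𝟙_ C)) := by
  rw [← MonoidalCategory.unitors_equal]; simp

section Braidedness

variable [SymmetricCategory C]

theorem aux_bnl {X Y : C} (f : X ⟶ Y) (Z : C) :
    (f ⊗ₘ 𝟙 Z) ≫ (β_ Y Z).hom = (β_ X Z).hom ≫ (𝟙 Z ⊗ₘ f) := by simp

theorem aux_bnr (X : C) {Y Z : C} (f : Y ⟶ Z) :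
    (𝟙 X ⊗ₘ f) ≫ (β_ X Z).hom = (β_ X Y).hom ≫ (f ⊗ₘ 𝟙 X) := by simp

theorem aux_hf (X Y Z : C) :
    (α_ X Y Z).hom ≫ ((β_ X (Y ⊗ Z)).hom ≫ (α_ Y Z X).hom) =
      ((β_ X Y).hom ⊗ₘ 𝟙 Z) ≫ ((α_ Y X Z).hom ≫ (𝟙 Y ⊗ₘ (β_ X Z).hom)) := by
  simpa using BraidedCategory.hexagon_forward X Y Z

theorem aux_hr (X Y Z : C) :
    (α_ X Y Z).inv ≫ ((β_ (X ⊗ Y) Z).hom ≫ (α_ Z X Y).inv) =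
      (𝟙 X ⊗ₘ (β_ Y Z).hom) ≫ ((α_ X Z Y).inv ≫ ((β_ X Z).hom ⊗ₘ 𝟙 Y)) := by
  simpa using BraidedCategory.hexagon_reverse X Y Z

theorem aux_braid :
    (λ_ (𝟙_ C)).hom ≫ 𝟙 (𝟙_ C) = (β_ (𝟙_ C) (𝟙_ C)).hom ≫ (λ_ (𝟙_ C)).hom := by
  rw [Category.comp_id, braiding_leftUnitor, MonoidalCategory.unitors_equal]

end Braidedness

end CAux

section Aux

variable {C : Type u} [Category.{v} C] [MonoidalCategory C]

theorem hom_mk_eq {X Y : Type w} {P : X → C} {Q : Y → C} (f₀ : X → Y)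
    {f g : ∀ x, P x ⟶ Q (f₀ x)} (h : ∀ x, f x = g x) :
    (Sigma.mk f₀ f : (Fam.mk X P) ⟶ (Fam.mk Y Q)) = Sigma.mk f₀ g :=
  congrArg (Sigma.mk f₀) (funext h)

/-- The fiberwise monoidal category structure on `Fam(C)`. -/
@[reducible] def monoidalStruct : MonoidalCategoryStruct (Fam.{w} C) where
  tensorObj := tensorObj'
  tensorHom := tensorHom'
  whiskerLeft A _ _ g := tensorHom' (𝟙 A) g
  whiskerRight f B := tensorHom' f (𝟙 B)
  tensorUnit := unitObj
  associator A B D :=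
    { hom := assocHom A B D
      inv := ⟨fun p => ((p.1, p.2.1), p.2.2), fun _ => (α_ _ _ _).inv⟩
      hom_inv_id := hom_mk_eq _ fun _ => (α_ _ _ _).hom_inv_id
      inv_hom_id := hom_mk_eq _ fun _ => (α_ _ _ _).inv_hom_id }
  leftUnitor A :=
    { hom := leftUnitorHom A
      inv := ⟨fun x => (PUnit.unit, x), fun _ => (λ_ _).inv⟩
      hom_inv_id := hom_mk_eq _ fun _ => (λ_ _).hom_inv_id
      inv_hom_id := hom_mk_eq _ fun _ => (λ_ _).inv_hom_id }
  rightUnitor A :=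
    { hom := rightUnitorHom A
      inv := ⟨fun x => (x, PUnit.unit), fun _ => (ρ_ _).inv⟩
      hom_inv_id := hom_mk_eq _ fun _ => (ρ_ _).hom_inv_id
      inv_hom_id := hom_mk_eq _ fun _ => (ρ_ _).inv_hom_id }

attribute [local instance] monoidalStruct

/-- The fiberwise monoidal structure on `Fam(C)`. -/
@[reducible] def monoidal : MonoidalCategory (Fam.{w} C) :=
  MonoidalCategory.ofTensorHom
    (id_tensorHom_id := fun A B => by
      refine Sigma.ext rfl (heq_of_eq (funext fun x => ?_))
      exact MonoidalCategory.id_tensorHom_id (A.fib x.1) (B.fib x.2))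
    (id_tensorHom := by intros; rfl)
    (tensorHom_id := by intros; rfl)
    (tensorHom_comp_tensorHom := fun f₁ f₂ g₁ g₂ => by
      refine Sigma.ext rfl (heq_of_eq (funext fun x => ?_))
      exact MonoidalCategory.tensorHom_comp_tensorHom (f₁.2 x.1) (f₂.2 x.2) (g₁.2 _) (g₂.2 _))
    (associator_naturality := fun f₁ f₂ f₃ => by
      refine Sigma.ext rfl (heq_of_eq (funext fun x => ?_))
      exact MonoidalCategory.associator_naturality (f₁.2 x.1.1) (f₂.2 x.1.2) (f₃.2 x.2))
    (leftUnitor_naturality := fun _ => by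
      refine Sigma.ext rfl (heq_of_eq (funext fun x => ?_))
      exact aux_lu (C := C) _)
    (rightUnitor_naturality := fun _ => by
      refine Sigma.ext rfl (heq_of_eq (funext fun x => ?_))
      exact aux_ru (C := C) _)
    (pentagon := fun _ _ _ _ => by
      refine Sigma.ext rfl (heq_of_eq (funext fun x => ?_))
      exact aux_pent (C := C) _ _ _ _)
    (triangle := fun _ _ => by
      refine Sigma.ext rfl (heq_of_eq (funext fun x => ?_))
      exact aux_tri (C := C) _ _)

attribute [local instance] monoidal

/-- The fiberwise symmetric structure on `Fam(C)`. -/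
def symmetric [SymmetricCategory C] : SymmetricCategory (Fam.{w} C) where
  braiding A B :=
    { hom := braidHom A B
      inv := braidHom B A
      hom_inv_id := hom_mk_eq _ fun _ => SymmetricCategory.symmetry _ _
      inv_hom_id := hom_mk_eq _ fun _ => SymmetricCategory.symmetry _ _ }
  braiding_naturality_left := by
    intro X Y f Z
    refine Sigma.ext rfl (heq_of_eq (funext fun x => ?_))
    exact aux_bnl (C := C) _ _
  braiding_naturality_right := by
    intro X Y Z f
    refine Sigma.ext rfl (heq_of_eq (funext fun x => ?_))
    exact aux_bnr (C := C) _ _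
  hexagon_forward _ _ _ := by
    refine Sigma.ext rfl (heq_of_eq (funext fun x => ?_))
    exact aux_hf (C := C) _ _ _
  hexagon_reverse _ _ _ := by
    refine Sigma.ext rfl (heq_of_eq (funext fun x => ?_))
    exact aux_hr (C := C) _ _ _
  symmetry A B := by
    refine Sigma.ext rfl (heq_of_eq (funext fun x => ?_))
    exact SymmetricCategory.symmetry (A.fib x.1) (B.fib x.2)

end Aux

section PAux

variable (C : Type u) [Category.{v} C] [MonoidalCategory C]

attribute [local instance] monoidalStruct monoidal

/-- The core monoidal structure on `p`. -/
def pCore : (p C).CoreMonoidal where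
  εIso :=
    { hom := pEpsHom C
      inv := ⟨fun _ => PUnit.unit, fun _ => 𝟙 (𝟙_ C)⟩
      hom_inv_id := hom_mk_eq _ fun _ => Category.id_comp _
      inv_hom_id := hom_mk_eq _ fun _ => Category.id_comp _ }
  μIso X Y :=
    { hom := pMuHom C X Y
      inv := ⟨fun q => (q.1, q.2), fun _ => (λ_ _).inv⟩
      hom_inv_id := hom_mk_eq _ fun _ => (λ_ _).hom_inv_id
      inv_hom_id := hom_mk_eq _ fun _ => (λ_ _).inv_hom_id }
  μIso_hom_natural_left := by
    intro X Y f X'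
    refine Sigma.ext rfl (heq_of_eq (funext fun x => ?_))
    exact aux_eps_nat (C := C)
  μIso_hom_natural_right := by
    intro X Y X' f
    refine Sigma.ext rfl (heq_of_eq (funext fun x => ?_))
    exact aux_eps_nat (C := C)
  associativity _ _ _ := by
    refine Sigma.ext rfl (heq_of_eq (funext fun x => ?_))
    exact aux_assoc (C := C)
  left_unitality _ := by
    refine Sigma.ext rfl (heq_of_eq (funext fun x => ?_))
    exact aux_lun (C := C)
  right_unitality _ := by
    refine Sigma.ext rfl (heq_of_eq (funext fun x => ?_))
    exact aux_run (C := C)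

/-- The strong monoidal structure on `p`. -/
def pMonoidal : (p C).Monoidal := (pCore C).toMonoidal

attribute [local instance] pMonoidal

/-- `p` is braided. -/
def pBraided [SymmetricCategory C] :
    letI := symmetric (C := C)
    (p C).Braided :=
  letI := symmetric (C := C)
  { toMonoidal := pMonoidal C
    braided := fun _ _ => by
      refine Sigma.ext rfl (heq_of_eq (funext fun x => ?_))
      exact aux_braid (C := C) }

/-- The adjunction `p ⊣ ♭`. -/
def theAdj : p C ⊣ flat C where
  unit :=
    { app := fun X => TypeCat.ofHom fun x => ⟨x, 𝟙 (𝟙_ C)⟩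
      naturality := fun _ _ f => congrArg TypeCat.ofHom (funext fun x =>
        congrArg (Sigma.mk (f x)) (Category.id_comp _).symm) }
  counit :=
    { app := fun A => ⟨fun s => s.1, fun s => s.2⟩
      naturality := fun _ _ f => hom_mk_eq _ fun _ => Category.id_comp _ }
  left_triangle_components X := hom_mk_eq _ fun _ => Category.id_comp _
  right_triangle_components A := congrArg TypeCat.ofHom (funext fun s =>
    congrArg (Sigma.mk s.1) (Category.id_comp s.2))

end PAux

end Fam

open MonoidalCategory CategoryTheory.Functor.LaxMonoidal in
/-- The assertion that the given symmetric monoidal structure on `Fam(C)` is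
the fiberwise one, that the given strong (symmetric) monoidal structure on `p`
has the specified structure maps, and that the adjunction `p ⊣ ♭` is a
monoidal adjunction. -/
def FamLNLSpec (C : Type u) [Category.{v} C] [MonoidalCategory C]
    [SymmetricCategory C]
    [MonoidalCategory (Fam.{v} C)] [SymmetricCategory (Fam.{v} C)]
    [(Fam.p C).Monoidal] [(Fam.p C).Braided] [(Fam.flat C).LaxMonoidal]
    (adj : Fam.p C ⊣ Fam.flat C) : Prop :=
  (∀ A B : Fam.{v} C, A ⊗ B = Fam.tensorObj' A B) ∧
  (𝟙_ (Fam.{v} C) = Fam.unitObj) ∧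
  HEq (ε (Fam.p C)) (Fam.pEpsHom C) ∧
  (∀ X Y : Type v, HEq (μ (Fam.p C) X Y) (Fam.pMuHom C X Y)) ∧
  adj.IsMonoidal

/-- For a symmetric monoidal category `C`, with `Type` carrying its cartesian
(symmetric) monoidal structure and `Fam(C)` the fiberwise symmetric monoidal
structure, the functor `p : Type ⥤ Fam(C)` is strong symmetric monoidal (with
the identity-index unit isomorphism and the left unitor on fibers), and the
adjunction `p ⊣ ♭` is a monoidal adjunction: `(Fam(C), p ⊣ ♭)` is a
linear-non-linear model in the sense of Benton. -/
theorem fam_linear_non_linear_model (C : Type u) [Category.{v} C]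
    [MonoidalCategory C] [SymmetricCategory C] :
    ∃ (M : MonoidalCategory (Fam.{v} C)) (S : @SymmetricCategory _ _ M)
      (L : @Functor.Monoidal (Type v) _ _ (Fam.{v} C) _ M (Fam.p C))
      (B : @Functor.Braided (Type v) _ _ _ (Fam.{v} C) _ M
        (@SymmetricCategory.toBraidedCategory _ _ M S) (Fam.p C))
      (Gfl : @Functor.LaxMonoidal (Fam.{v} C) _ M (Type v) _ _ (Fam.flat C))
      (adj : Fam.p C ⊣ Fam.flat C),
      @FamLNLSpec C _ _ _ M S L B Gfl adj := by
  letI M : MonoidalCategory (Fam.{v} C) :=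
    letI := Fam.monoidalStruct (C := C); Fam.monoidal
  letI S : SymmetricCategory (Fam.{v} C) := Fam.symmetric
  letI L : (Fam.p C).Monoidal := Fam.pMonoidal C
  letI B : (Fam.p C).Braided := Fam.pBraided C
  letI adj : Fam.p C ⊣ Fam.flat C := Fam.theAdj C
  letI Gfl : (Fam.flat C).LaxMonoidal := adj.rightAdjointLaxMonoidal
  exact ⟨M, S, L, B, Gfl, adj, fun _ _ => rfl, rfl, HEq.rfl, fun _ _ => HEq.rfl,
    inferInstance⟩
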